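/- If a non-empty word v is an internal factor of vv (i.e., there exist non-empty words x and y such that vv = xvy), then there exist a non-empty word t and integers i, j ≥ 1 such that x = t^i, y = t^j, and v = t^(i+j). -/

import Mathlib

/-- n-fold power of a word (list) under concatenation. -/
def wpow {α : Type*} (u : List α) (n : ℕ) : List α := (List.replicate n u).flatten

lemma wpow_add {α : Type*} (t : List α) (i j : ℕ) :
    wpow t (i + j) = wpow t i ++ wpow t j := by
  unfold wpow; rw [List.replicate_add, List.flatten_append]

lemma wpow_one {α : Type*} (t : List α) : wpow t 1 = t := by simp [wpow]

lemma comm_wpow {α : Type*} : ∀ n (x w : List α), x.length + w.length ≤ n →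
    x ≠ [] → w ≠ [] → x ++ w = w ++ x →
    ∃ (t : List α) (i j : ℕ), t ≠ [] ∧ 1 ≤ i ∧ 1 ≤ j ∧
      x = wpow t i ∧ w = wpow t j := by
  intro n
  induction n with
  | zero =>
    intro x w hn hx _ _
    simp at hn
    exact absurd hn.1 hx
  | succ n ih =>
    intro x w hn hx hw hc
    rcases le_total x.length w.length with hle | hle
    · -- x is a prefix of w
      have hpre : w.take x.length = x := by
        have := congrArg (List.take x.length) hc
        rw [List.take_append_of_le_length hle, List.take_left] at this
        exact this.symm
      set u := w.drop x.length with hu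
      have hwxu : w = x ++ u := by rw [← hpre, hu, List.take_append_drop]
      rcases eq_or_ne u [] with hu0 | hune
      · refine ⟨x, 1, 1, hx, le_refl _, le_refl _, (wpow_one x).symm, ?_⟩
        rw [wpow_one, hwxu, hu0, List.append_nil]
      · have hc' : x ++ u = u ++ x := by
          have : x ++ (x ++ u) = (x ++ u) ++ x := by rw [← hwxu]; exact hc
          rw [List.append_assoc] at this
          exact List.append_cancel_left this
        have hlen : x.length + u.length ≤ n := by
          have hwlen : w.length = x.length + u.length := by
            rw [hwxu, List.length_append]
          have hx1 : 1 ≤ x.length := List.length_pos_iff.mpr hx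
          omega
        obtain ⟨t, i, j, ht, hi, hj, hxt, hut⟩ := ih x u hlen hx hune hc'
        exact ⟨t, i, i + j, ht, hi, by omega, hxt, by
          rw [hwxu, wpow_add, hxt, hut]⟩
    · -- w is a prefix of x
      have hpre : x.take w.length = w := by
        have := congrArg (List.take w.length) hc.symm
        rw [List.take_append_of_le_length hle, List.take_left] at this
        exact this.symm
      set u := x.drop w.length with hu
      have hwxu : x = w ++ u := by rw [← hpre, hu, List.take_append_drop]
      rcases eq_or_ne u [] with hu0 | hune
      · refine ⟨w, 1, 1, hw, le_refl _, le_refl _, ?_, (wpow_one w).symm⟩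
        rw [wpow_one, hwxu, hu0, List.append_nil]
      · have hc' : w ++ u = u ++ w := by
          have : w ++ (w ++ u) = (w ++ u) ++ w := by rw [← hwxu]; exact hc.symm
          rw [List.append_assoc] at this
          exact List.append_cancel_left this
        have hlen : w.length + u.length ≤ n := by
          have hxlen : x.length = w.length + u.length := by
            rw [hwxu, List.length_append]
          have hw1 : 1 ≤ w.length := List.length_pos_iff.mpr hw
          omega
        obtain ⟨t, i, j, ht, hi, hj, hwt, hut⟩ := ih w u hlen hw hune hc'
        exact ⟨t, i + j, i, ht, by omega, hi, by rw [hwxu, wpow_add, hwt, hut], hwt⟩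

theorem internal_factor_of_square {α : Type*} (v x y : List α)
    (hv : v ≠ []) (hx : x ≠ []) (hy : y ≠ [])
    (h : v ++ v = x ++ v ++ y) :
    ∃ (t : List α) (i j : ℕ), t ≠ [] ∧ 1 ≤ i ∧ 1 ≤ j ∧
      x = wpow t i ∧ y = wpow t j ∧ v = wpow t (i + j) := by
  have hlen : v.length = x.length + y.length := by
    have := congrArg List.length h
    simp [List.length_append] at this
    omega
  have hxle : x.length ≤ v.length := by omega
  -- x is a prefix of v
  have hpre : v.take x.length = x := by
    have := congrArg (List.take x.length) h
    rw [List.take_append_of_le_length hxle, List.append_assoc,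
      List.take_append_of_le_length (le_refl _), List.take_length] at this
    exact this
  set v₁ := v.drop x.length with hv₁
  have hvxv : v = x ++ v₁ := by rw [← hpre, hv₁, List.take_append_drop]
  have key : v₁ ++ v = v ++ y := by
    have : x ++ (v₁ ++ v) = x ++ (v ++ y) := by
      rw [← List.append_assoc, ← hvxv, h, List.append_assoc]
    exact List.append_cancel_left this
  have key2 : (v₁ ++ x) ++ v₁ = (x ++ v₁) ++ y := by
    rw [List.append_assoc, ← hvxv]
    exact key
  have hlens : (v₁ ++ x).length = (x ++ v₁).length := by
    simp [List.length_append]; omega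
  obtain ⟨hcomm, hy1⟩ := List.append_inj key2 hlens
  have hv₁ne : v₁ ≠ [] := by rw [hy1]; exact hy
  obtain ⟨t, i, j, ht, hi, hj, hxt, hv₁t⟩ :=
    comm_wpow (x.length + v₁.length) x v₁ (le_refl _) hx hv₁ne hcomm.symm
  exact ⟨t, i, j, ht, hi, hj, hxt, hy1 ▸ hv₁t, by rw [hvxv, wpow_add, hxt, hv₁t]⟩
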